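/- For a finite poset P on n elements and a composition α = (α₁,…,α_k) of n, the number of listings σ of P such that {i ∈ [n−1] : σ_i ≰_P σ_{i+1}} ⊆ {α₁, α₁+α₂, …, α₁+⋯+α_{k−1}} equals the number of ordered set partitions (P₁,…,P_k) of P where each P_i is a chain with α_i elements. -/

import Mathlib

/-- The list of prefix sums `α₁, α₁+α₂, …` of a list of naturals
(including the total sum). -/
def prefixSums (L : List ℕ) : List ℕ :=
  (List.range L.length).map (fun j => (L.take (j + 1)).sum)

namespace Stmt9Aux

/-- A chain in a partial order carries a linear order. -/
noncomputable def chainLinearOrder {α : Type*} [PartialOrder α] (s : Finset α)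
    (h : ∀ a ∈ s, ∀ b ∈ s, a ≤ b ∨ b ≤ a) : LinearOrder {x // x ∈ s} :=
  { (inferInstance : PartialOrder {x // x ∈ s}) with
    le_total := fun a b => h a a.2 b b.2
    toDecidableLE := Classical.decRel _ }

/-- partial sums -/
def S (L : List ℕ) (j : ℕ) : ℕ := (L.take j).sum

lemma S_zero (L : List ℕ) : S L 0 = 0 := rfl

lemma S_succ (L : List ℕ) {j : ℕ} (hj : j < L.length) :
    S L (j + 1) = S L j + L.get ⟨j, hj⟩ := by
  simpa [S] using List.sum_take_succ L j hj

lemma S_mono (L : List ℕ) : Monotone (S L) := by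
  apply monotone_nat_of_le_succ
  intro j
  by_cases hj : j < L.length
  · rw [S_succ L hj]; exact Nat.le_add_right _ _
  · unfold S
    rw [List.take_of_length_le (by omega), List.take_of_length_le (by omega)]

lemma S_length (L : List ℕ) : S L L.length = L.sum := by
  simp [S]

lemma mem_prefixSums (L : List ℕ) {m : ℕ} :
    m ∈ prefixSums L ↔ ∃ j < L.length, m = S L (j + 1) := by
  simp [prefixSums, S, eq_comm]

lemma not_mem_prefixSums (L : List ℕ) {j m : ℕ} (hj : j < L.length)
    (h1 : S L j < m) (h2 : m < S L (j + 1)) : m ∉ prefixSums L := by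
  rw [mem_prefixSums]
  rintro ⟨j', hj', rfl⟩
  rcases lt_or_ge j' j with h | h
  · have := S_mono L (show j' + 1 ≤ j by omega); omega
  · have := S_mono L (show j + 1 ≤ j' + 1 by omega); omega

/-- the block index of position `i` -/
def blk (L : List ℕ) (i : ℕ) : ℕ := Nat.findGreatest (fun j => S L j ≤ i) L.length

lemma S_blk_le (L : List ℕ) (i : ℕ) : S L (blk L i) ≤ i :=
  Nat.findGreatest_spec (P := fun j => S L j ≤ i) (Nat.zero_le _) (by simp [S_zero])

lemma blk_lt (L : List ℕ) {i : ℕ} (hi : i < S L L.length) : blk L i < L.length := by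
  have h1 : blk L i ≤ L.length := Nat.findGreatest_le _
  rcases lt_or_eq_of_le h1 with h | h
  · exact h
  · exfalso; have := S_blk_le L i; rw [h] at this; omega

lemma lt_S_blk_succ (L : List ℕ) {i : ℕ} (hi : i < S L L.length) :
    i < S L (blk L i + 1) := by
  by_contra hc
  push_neg at hc
  exact Nat.findGreatest_is_greatest (Nat.lt_succ_self _) (blk_lt L hi) hc

lemma blk_unique (L : List ℕ) {i j : ℕ} (hj : j < L.length)
    (h1 : S L j ≤ i) (h2 : i < S L (j + 1)) : blk L i = j := by
  have hi : i < S L L.length := lt_of_lt_of_le h2 (S_mono L (by omega))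
  have hb1 := S_blk_le L i
  have hb2 := lt_S_blk_succ L hi
  rcases lt_trichotomy (blk L i) j with h | h | h
  · have := S_mono L (show blk L i + 1 ≤ j by omega); omega
  · exact h
  · have := S_mono L (show j + 1 ≤ blk L i by omega); omega

end Stmt9Aux

open Stmt9Aux in
/-- for a finite poset `α` with `n` elements and a composition
`L = (α₁,…,α_k)` of `n`, the number of listings whose non-ascent set is contained
in `{α₁, α₁+α₂, …, α₁+⋯+α_{k-1}}` equals the number of ordered set partitions
`(P₁,…,P_k)` of `α` where each `P_i` is a chain with `α_i` elements. -/
theorem listings_eq_ordered_chain_partitions {α : Type*} [Fintype α] [PartialOrder α]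
    (n : ℕ) (hn : n = Fintype.card α)
    (L : List ℕ) (hpos : ∀ x ∈ L, 0 < x) (hsum : L.sum = n) :
    Nat.card {σ : Fin n ≃ α // ∀ i j : Fin n, (j : ℕ) = (i : ℕ) + 1 →
        ¬ σ i ≤ σ j → ((i : ℕ) + 1) ∈ prefixSums L} =
    Nat.card {f : Fin L.length → Finset α //
        (∀ j, (f j).card = L.get j) ∧
        (∀ j, ∀ a ∈ f j, ∀ b ∈ f j, a ≤ b ∨ b ≤ a) ∧
        (∀ j₁ j₂, j₁ ≠ j₂ → Disjoint (f j₁) (f j₂)) ∧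
        (∀ a : α, ∃ j, a ∈ f j)} := by
  classical
  set k := L.length with hk
  have hSk : S L k = n := by rw [S_length, hsum]
  -- blocks of indices
  have hBbound : ∀ j : Fin k, ∀ m ∈ Finset.Ico (S L (j : ℕ)) (S L ((j : ℕ) + 1)), m < n := by
    intro j m hm
    rw [Finset.mem_Ico] at hm
    calc m < S L ((j : ℕ) + 1) := hm.2
    _ ≤ S L k := S_mono L (by omega)
    _ = n := hSk
  set B : Fin k → Finset (Fin n) :=
    fun j => (Finset.Ico (S L (j : ℕ)) (S L ((j : ℕ) + 1))).attachFin (hBbound j) with hB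
  have memB : ∀ (j : Fin k) (i : Fin n),
      i ∈ B j ↔ S L (j : ℕ) ≤ (i : ℕ) ∧ (i : ℕ) < S L ((j : ℕ) + 1) := by
    intro j i
    rw [hB, Finset.mem_attachFin, Finset.mem_Ico]
  have cardB : ∀ j : Fin k, (B j).card = L.get j := by
    intro j
    rw [hB, Finset.card_attachFin, Nat.card_Ico, S_succ L j.2]
    simp only [Fin.eta]
    omega
  have hiS : ∀ i : Fin n, (i : ℕ) < S L k := fun i => by rw [hSk]; exact i.2
  have memB_blk : ∀ i : Fin n, i ∈ B ⟨blk L i, blk_lt L (hiS i)⟩ := by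
    intro i
    rw [memB]
    exact ⟨S_blk_le L i, lt_S_blk_succ L (hiS i)⟩
  -- the map from listings to partitions
  set Ψ : (Fin n ≃ α) → Fin k → Finset α := fun σ j => (B j).image σ with hΨ
  -- ascent chain lemma
  have asc : ∀ (σ : Fin n ≃ α), (∀ i j : Fin n, (j : ℕ) = (i : ℕ) + 1 →
        ¬ σ i ≤ σ j → ((i : ℕ) + 1) ∈ prefixSums L) →
      ∀ (j : Fin k) (i i' : Fin n), S L (j : ℕ) ≤ (i : ℕ) → (i : ℕ) ≤ (i' : ℕ) →
        (i' : ℕ) < S L ((j : ℕ) + 1) → σ i ≤ σ i' := by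
    intro σ hσ j i i' h1 h2 h3
    have key : ∀ m : ℕ, (i : ℕ) ≤ m → ∀ (hm : m < n), m < S L ((j : ℕ) + 1) →
        σ i ≤ σ ⟨m, hm⟩ := by
      intro m
      induction m with
      | zero =>
        intro h0 hm _
        have hi0 : i = (⟨0, hm⟩ : Fin n) := Fin.ext (by simp only [Fin.val_mk]; omega)
        exact le_of_eq (congrArg σ hi0)
      | succ m ih =>
        intro h0 hm hlt
        rcases Nat.lt_or_ge (i : ℕ) (m + 1) with h | h
        · have him : (i : ℕ) ≤ m := by omega
          have hmn : m < n := by omega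
          have hml : m < S L ((j : ℕ) + 1) := by omega
          have step : σ ⟨m, hmn⟩ ≤ σ ⟨m + 1, hm⟩ := by
            by_contra hcon
            have hmem : m + 1 ∈ prefixSums L := by
              simpa using hσ ⟨m, hmn⟩ ⟨m + 1, hm⟩ rfl hcon
            exact not_mem_prefixSums L j.2 (by omega) hlt hmem
          exact le_trans (ih him hmn hml) step
        · have hi1 : i = (⟨m + 1, hm⟩ : Fin n) := Fin.ext (by simp only [Fin.val_mk]; omega)
          exact le_of_eq (congrArg σ hi1)
    have := key (i' : ℕ) h2 i'.2 h3
    simpa using this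
  -- Ψ lands in the partition subtype
  have Ψprop : ∀ (σ : Fin n ≃ α), (∀ i j : Fin n, (j : ℕ) = (i : ℕ) + 1 →
        ¬ σ i ≤ σ j → ((i : ℕ) + 1) ∈ prefixSums L) →
      (∀ j, (Ψ σ j).card = L.get j) ∧
      (∀ j, ∀ a ∈ Ψ σ j, ∀ b ∈ Ψ σ j, a ≤ b ∨ b ≤ a) ∧
      (∀ j₁ j₂, j₁ ≠ j₂ → Disjoint (Ψ σ j₁) (Ψ σ j₂)) ∧
      (∀ a : α, ∃ j, a ∈ Ψ σ j) := by
    intro σ hσ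
    refine ⟨?_, ?_, ?_, ?_⟩
    · intro j
      rw [hΨ]
      simp only
      rw [Finset.card_image_of_injective _ σ.injective, cardB]
    · intro j a ha b hb
      simp only [hΨ, Finset.mem_image] at ha hb
      obtain ⟨i₁, hi₁, rfl⟩ := ha
      obtain ⟨i₂, hi₂, rfl⟩ := hb
      rw [memB] at hi₁ hi₂
      rcases Nat.le_or_le (i₁ : ℕ) (i₂ : ℕ) with h | h
      · exact Or.inl (asc σ hσ j i₁ i₂ hi₁.1 h hi₂.2)
      · exact Or.inr (asc σ hσ j i₂ i₁ hi₂.1 h hi₁.2)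
    · intro j₁ j₂ hne
      rw [Finset.disjoint_left]
      intro a ha₁ ha₂
      simp only [hΨ, Finset.mem_image] at ha₁ ha₂
      obtain ⟨i₁, hi₁, rfl⟩ := ha₁
      obtain ⟨i₂, hi₂, h12⟩ := ha₂
      have : i₂ = i₁ := σ.injective h12
      subst this
      rw [memB] at hi₁ hi₂
      apply hne
      apply Fin.ext
      rw [← blk_unique L j₁.2 hi₁.1 hi₁.2, ← blk_unique L j₂.2 hi₂.1 hi₂.2]
    · intro a
      refine ⟨⟨blk L (σ.symm a), blk_lt L (hiS _)⟩, ?_⟩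
      simp only [hΨ, Finset.mem_image]
      exact ⟨σ.symm a, memB_blk _, σ.apply_symm_apply a⟩
  -- the bundled map
  set Φ : {σ : Fin n ≃ α // ∀ i j : Fin n, (j : ℕ) = (i : ℕ) + 1 →
        ¬ σ i ≤ σ j → ((i : ℕ) + 1) ∈ prefixSums L} →
      {f : Fin L.length → Finset α //
        (∀ j, (f j).card = L.get j) ∧
        (∀ j, ∀ a ∈ f j, ∀ b ∈ f j, a ≤ b ∨ b ≤ a) ∧
        (∀ j₁ j₂, j₁ ≠ j₂ → Disjoint (f j₁) (f j₂)) ∧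
        (∀ a : α, ∃ j, a ∈ f j)} :=
    fun σ => ⟨Ψ σ.1, Ψprop σ.1 σ.2⟩ with hΦ
  apply Nat.card_eq_of_bijective Φ
  constructor
  · -- injectivity
    rintro ⟨σ₁, hσ₁⟩ ⟨σ₂, hσ₂⟩ h
    have hΨeq : Ψ σ₁ = Ψ σ₂ := congrArg Subtype.val h
    -- half lemma
    have half : ∀ (σ σ' : Fin n ≃ α),
        (∀ i j : Fin n, (j : ℕ) = (i : ℕ) + 1 → ¬ σ i ≤ σ j → ((i : ℕ) + 1) ∈ prefixSums L) →
        (∀ i j : Fin n, (j : ℕ) = (i : ℕ) + 1 → ¬ σ' i ≤ σ' j → ((i : ℕ) + 1) ∈ prefixSums L) →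
        Ψ σ = Ψ σ' → ∀ i : Fin n, (∀ i' : Fin n, (i' : ℕ) < (i : ℕ) → σ i' = σ' i') →
        σ' i ≤ σ i := by
      intro σ σ' hσ hσ' heq i ih
      set j : Fin k := ⟨blk L (i : ℕ), blk_lt L (hiS i)⟩ with hj
      have h1 : σ i ∈ Ψ σ' j := by
        rw [← heq]
        simp only [hΨ, Finset.mem_image]
        exact ⟨i, memB_blk i, rfl⟩
      simp only [hΨ, Finset.mem_image] at h1
      obtain ⟨i'', hi'', heq2⟩ := h1
      rcases Nat.lt_or_ge (i'' : ℕ) (i : ℕ) with h | h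
      · exfalso
        have := ih i'' h
        rw [← this] at heq2
        have : i'' = i := σ.injective heq2
        omega
      · rw [← heq2]
        rw [memB] at hi''
        exact asc σ' hσ' j i i'' (S_blk_le L (i : ℕ)) h hi''.2
    have : ∀ m : ℕ, ∀ i : Fin n, (i : ℕ) = m → σ₁ i = σ₂ i := by
      intro m
      induction m using Nat.strong_induction_on with
      | _ m ih =>
        intro i him
        have ihf : ∀ i' : Fin n, (i' : ℕ) < (i : ℕ) → σ₁ i' = σ₂ i' := by
          intro i' hi'
          exact ih (i' : ℕ) (by omega) i' rfl
        have ihg : ∀ i' : Fin n, (i' : ℕ) < (i : ℕ) → σ₂ i' = σ₁ i' := by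
          intro i' hi'
          exact (ihf i' hi').symm
        exact le_antisymm (half σ₂ σ₁ hσ₂ hσ₁ hΨeq.symm i ihg) (half σ₁ σ₂ hσ₁ hσ₂ hΨeq i ihf)
    apply Subtype.ext
    apply Equiv.ext
    intro i
    exact this (i : ℕ) i rfl
  · -- surjectivity
    rintro ⟨f, hcard, hchain, hdisj, hcover⟩
    -- enumerate each block in increasing order
    have key : ∀ j : Fin k, ∃ e : Fin (L.get j) → α,
        (∀ t, e t ∈ f j) ∧ (∀ t t' : Fin (L.get j), t ≤ t' → e t ≤ e t') ∧
        Function.Injective e ∧ ∀ a ∈ f j, ∃ t, e t = a := by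
      intro j
      letI LO := chainLinearOrder (f j) (hchain j)
      have hc : Fintype.card {x // x ∈ f j} = L.get j := by
        rw [Fintype.card_coe, hcard j]
      let E := monoEquivOfFin {x // x ∈ f j} hc
      refine ⟨fun t => (E t : α), fun t => (E t).2, ?_, ?_, ?_⟩
      · intro t t' h
        exact E.monotone h
      · intro t t' h
        exact E.injective (Subtype.ext h)
      · intro a ha
        obtain ⟨t, ht⟩ := E.surjective ⟨a, ha⟩
        exact ⟨t, congrArg Subtype.val ht⟩
    choose e he1 he2 he3 he4 using key
    -- construct the listing
    have hoff : ∀ i : Fin n,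
        (i : ℕ) - S L (blk L (i : ℕ)) < L.get ⟨blk L (i : ℕ), blk_lt L (hiS i)⟩ := by
      intro i
      have h1 := S_blk_le L (i : ℕ)
      have h2 := lt_S_blk_succ L (hiS i)
      have h3 := S_succ L (blk_lt L (hiS i))
      omega
    set g : Fin n → α := fun i =>
      e ⟨blk L (i : ℕ), blk_lt L (hiS i)⟩ ⟨(i : ℕ) - S L (blk L (i : ℕ)), hoff i⟩ with hg
    have g_eq : ∀ (i : Fin n) (j : Fin k) (t : Fin (L.get j)),
        (i : ℕ) = S L (j : ℕ) + (t : ℕ) → g i = e j t := by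
      intro i j t hit
      have hblk : blk L (i : ℕ) = (j : ℕ) := by
        apply blk_unique L j.2 (by omega)
        rw [S_succ L j.2]
        simp only [Fin.eta]
        omega
      have hjj : (⟨blk L (i : ℕ), blk_lt L (hiS i)⟩ : Fin k) = j := Fin.ext hblk
      rw [hg]
      simp only
      subst hjj
      congr 1
      apply Fin.ext
      simp only [Fin.val_mk] at hit ⊢
      omega
    have g_mem : ∀ i : Fin n, g i ∈ f ⟨blk L (i : ℕ), blk_lt L (hiS i)⟩ := fun i => he1 _ _
    have rep : ∀ i : Fin n, ∃ (j : Fin k) (t : Fin (L.get j)),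
        (i : ℕ) = S L (j : ℕ) + (t : ℕ) := by
      intro i
      refine ⟨⟨blk L (i : ℕ), blk_lt L (hiS i)⟩,
        ⟨(i : ℕ) - S L (blk L (i : ℕ)), hoff i⟩, ?_⟩
      have := S_blk_le L (i : ℕ)
      simp only [Fin.val_mk]
      omega
    have ginj : Function.Injective g := by
      intro i₁ i₂ h
      obtain ⟨j₁, t₁, h₁⟩ := rep i₁
      obtain ⟨j₂, t₂, h₂⟩ := rep i₂
      rw [g_eq i₁ j₁ t₁ h₁, g_eq i₂ j₂ t₂ h₂] at h
      have hj : j₁ = j₂ := by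
        by_contra hne
        have m1 : e j₁ t₁ ∈ f j₁ := he1 _ _
        have m2 : e j₁ t₁ ∈ f j₂ := by rw [h]; exact he1 _ _
        exact (Finset.disjoint_left.mp (hdisj _ _ hne)) m1 m2
      subst hj
      have hts := congrArg Fin.val (he3 j₁ h)
      exact Fin.ext (by omega)
    have gsurj : Function.Surjective g := by
      intro a
      obtain ⟨j, haj⟩ := hcover a
      obtain ⟨t, ht⟩ := he4 j a haj
      have hin : S L (j : ℕ) + (t : ℕ) < n := by
        have h3 : S L ((j : ℕ) + 1) = S L (j : ℕ) + L.get j := by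
          rw [S_succ L j.2, Fin.eta]
        have : S L ((j : ℕ) + 1) ≤ S L k := S_mono L (by omega)
        have ht2 := t.2
        omega
      refine ⟨⟨S L (j : ℕ) + (t : ℕ), hin⟩, ?_⟩
      rw [g_eq ⟨S L (j : ℕ) + (t : ℕ), hin⟩ j t rfl, ht]
    set σ : Fin n ≃ α := Equiv.ofBijective g ⟨ginj, gsurj⟩ with hσdef
    have hσg : ∀ i, σ i = g i := fun i => rfl
    have hσcond : ∀ i j : Fin n, (j : ℕ) = (i : ℕ) + 1 →
        ¬ σ i ≤ σ j → ((i : ℕ) + 1) ∈ prefixSums L := by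
      intro i i' hii' hcon
      by_contra hnp
      apply hcon
      rw [hσg, hσg]
      have hb1 := S_blk_le L (i : ℕ)
      have hb2 := lt_S_blk_succ L (hiS i)
      have h3 := S_succ L (blk_lt L (hiS i))
      have hlt : (i : ℕ) + 1 < S L (blk L (i : ℕ) + 1) := by
        rcases Nat.lt_or_ge ((i : ℕ) + 1) (S L (blk L (i : ℕ) + 1)) with h | h
        · exact h
        · exfalso
          apply hnp
          rw [mem_prefixSums]
          exact ⟨blk L (i : ℕ), blk_lt L (hiS i), by omega⟩
      have hgi : g i = e ⟨blk L (i : ℕ), blk_lt L (hiS i)⟩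
          ⟨(i : ℕ) - S L (blk L (i : ℕ)), hoff i⟩ := rfl
      have hgi' : g i' = e ⟨blk L (i : ℕ), blk_lt L (hiS i)⟩
          ⟨(i : ℕ) + 1 - S L (blk L (i : ℕ)), by omega⟩ := by
        apply g_eq
        simp only [Fin.val_mk]
        omega
      rw [hgi, hgi']
      apply he2
      simp only [Fin.mk_le_mk]
      omega
    refine ⟨⟨σ, hσcond⟩, ?_⟩
    rw [hΦ]
    apply Subtype.ext
    simp only
    funext j
    have hsub : Ψ σ j ⊆ f j := by
      intro a ha
      simp only [hΨ, Finset.mem_image] at ha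
      obtain ⟨i, hiB, rfl⟩ := ha
      rw [memB] at hiB
      have hblk : blk L (i : ℕ) = (j : ℕ) := blk_unique L j.2 hiB.1 hiB.2
      have := g_mem i
      rw [hσg]
      have hjj : (⟨blk L (i : ℕ), blk_lt L (hiS i)⟩ : Fin k) = j := Fin.ext hblk
      rwa [hjj] at this
    apply Finset.eq_of_subset_of_card_le hsub
    rw [(Ψprop σ hσcond).1 j, hcard j]
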